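/- Let R be a connected commutative ring and let f ∈ R[X] be a polynomial that is separable over R. Then f ≠ 0 and the set {r ∈ R : f(r) = 0} is finite of cardinality at most the degree of f. -/
import Mathlib

open Polynomial

private lemma aux_sep_roots {R : Type*} [CommRing R] [Nontrivial R]
    (hconn : ∀ e : R, IsIdempotentElem e → e = 0 ∨ e = 1) :
    ∀ n (f : R[X]), f.Separable → f.natDegree ≤ n →
      {r : R | f.eval r = 0}.Finite ∧ {r : R | f.eval r = 0}.ncard ≤ f.natDegree := by
  intro n
  induction n with
  | zero =>
    intro f hf hdeg
    have hroots : {r : R | f.eval r = 0} = ∅ := by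
      ext b
      simp only [Set.mem_setOf_eq, Set.mem_empty_iff_false, iff_false]
      intro hb
      have hC : f = C (f.coeff 0) := f.eq_C_of_natDegree_eq_zero (Nat.le_zero.mp hdeg)
      rw [hC] at hb
      simp only [eval_C] at hb
      exact hf.ne_zero (by rw [hC, hb, map_zero])
    rw [hroots]
    simp
  | succ n ih =>
    intro f hf hdeg
    by_cases hex : ∃ a, f.eval a = 0
    · obtain ⟨a, ha⟩ := hex
      obtain ⟨g, hg⟩ := dvd_iff_isRoot.mpr ha
      have hgsep : g.Separable := hf.of_dvd ⟨X - C a, by rw [hg]; ring⟩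
      have hgne : g ≠ 0 := hgsep.ne_zero
      have hdegf : f.natDegree = g.natDegree + 1 := by
        rw [hg, (monic_X_sub_C a).natDegree_mul' hgne, natDegree_X_sub_C]
        ring
      obtain ⟨hfin, hcard⟩ := ih g hgsep (by omega)
      have hsub : {r : R | f.eval r = 0} ⊆ insert a {r : R | g.eval r = 0} := by
        intro b hb
        by_cases hba : b = a
        · exact Set.mem_insert_iff.mpr (Or.inl hba)
        · right
          simp only [Set.mem_setOf_eq] at hb ⊢
          obtain ⟨u, v, huv⟩ := hf
          have h1 : v.eval b * (derivative f).eval b = 1 := by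
            have := congrArg (eval b) huv
            simpa [hb] using this
          have h2 : (derivative f).eval b
              = g.eval b + (b - a) * (derivative g).eval b := by
            rw [hg, derivative_mul]
            simp only [derivative_sub, derivative_X, derivative_C, sub_zero,
              one_mul, eval_add, eval_mul, eval_sub, eval_X, eval_C]
          have h3 : (b - a) * g.eval b = 0 := by
            rw [hg] at hb
            simpa using hb
          have hGF : g.eval b * (derivative f).eval b = g.eval b * g.eval b := by
            linear_combination (g.eval b) * h2 + ((derivative g).eval b) * h3
          have hidem : IsIdempotentElem (g.eval b * v.eval b) := by
            unfold IsIdempotentElem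
            linear_combination -(v.eval b)^2 * hGF + (g.eval b * v.eval b) * h1
          rcases hconn _ hidem with e0 | e1
          · calc g.eval b = g.eval b * (v.eval b * (derivative f).eval b) := by
                  rw [h1, mul_one]
              _ = v.eval b * (g.eval b * (derivative f).eval b) := by ring
              _ = v.eval b * (g.eval b * g.eval b) := by rw [hGF]
              _ = (g.eval b * v.eval b) * g.eval b := by ring
              _ = 0 := by rw [e0, zero_mul]
          · exfalso
            apply hba
            have hD : b - a = 0 := by
              calc b - a = (b - a) * (g.eval b * v.eval b) := by rw [e1, mul_one]
                _ = ((b - a) * g.eval b) * v.eval b := by ring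
                _ = 0 := by rw [h3, zero_mul]
            exact sub_eq_zero.mp hD
      refine ⟨(hfin.insert a).subset hsub, ?_⟩
      calc {r : R | f.eval r = 0}.ncard
          ≤ (insert a {r : R | g.eval r = 0}).ncard :=
            Set.ncard_le_ncard hsub (hfin.insert a)
        _ ≤ {r : R | g.eval r = 0}.ncard + 1 := Set.ncard_insert_le _ _
        _ ≤ g.natDegree + 1 := by omega
        _ = f.natDegree := hdegf.symm
    · push_neg at hex
      have : {r : R | f.eval r = 0} = ∅ := by ext b; simp [hex b]
      rw [this]
      simp

/-- Theorem 1.5 (Theorem `degbdintrothm`): if `R` is a connected commutative ring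
(its only idempotents are `0` and `1`, and `R` is nontrivial) and `f ∈ R[X]` is
separable over `R`, then `f ≠ 0` and the set of roots of `f` in `R` is finite
of cardinality at most `deg f`. -/
theorem stmt_0 {R : Type*} [CommRing R] [Nontrivial R]
    (hconn : ∀ e : R, IsIdempotentElem e → e = 0 ∨ e = 1)
    (f : Polynomial R) (hf : f.Separable) :
    f ≠ 0 ∧ {r : R | f.eval r = 0}.Finite ∧
      {r : R | f.eval r = 0}.ncard ≤ f.natDegree := by
  obtain ⟨h1, h2⟩ := aux_sep_roots hconn f.natDegree f hf le_rfl
  exact ⟨hf.ne_zero, h1, h2⟩
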